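/- (Linear independence of the electric and magnetic mode-1 tangent fields on any angular region; underlying Observation (2) of §6.2.) If a, b ∈ ℝ³ and (a − ⟨x,a⟩·x) + (x × b) = 0 for every point x of some nonempty open subset of S² (i.e. the tangent field Σₘ aₘ·Eₘ + Σₘ bₘ·Hₘ vanishes on that open set), then a = 0 and b = 0. -/

import Mathlib

noncomputable section

/-- The cross product on Euclidean `ℝ³`. -/
def cross3 (x y : EuclideanSpace ℝ (Fin 3)) : EuclideanSpace ℝ (Fin 3) :=
  WithLp.toLp 2 ![x 1 * y 2 - x 2 * y 1, x 2 * y 0 - x 0 * y 2, x 0 * y 1 - x 1 * y 0]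

section Aux

local notation "E3" => EuclideanSpace ℝ (Fin 3)

private lemma pair_sum' (u0 u1 u2 w0 w1 w2 a0 a1 a2 b0 b1 b2 : ℝ)
    (hu : u0^2+u1^2+u2^2 = 1) (hw : w0^2+w1^2+w2^2 = 1)
    (hne : ¬(u0=w0 ∧ u1=w1 ∧ u2=w2))
    (eu0 : a0 - (u0*a0+u1*a1+u2*a2)*u0 + (u1*b2-u2*b1) = 0)
    (eu1 : a1 - (u0*a0+u1*a1+u2*a2)*u1 + (u2*b0-u0*b2) = 0)
    (eu2 : a2 - (u0*a0+u1*a1+u2*a2)*u2 + (u0*b1-u1*b0) = 0)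
    (ew0 : a0 - (w0*a0+w1*a1+w2*a2)*w0 + (w1*b2-w2*b1) = 0)
    (ew1 : a1 - (w0*a0+w1*a1+w2*a2)*w1 + (w2*b0-w0*b2) = 0)
    (ew2 : a2 - (w0*a0+w1*a1+w2*a2)*w2 + (w0*b1-w1*b0) = 0) :
    (u0*a0+u1*a1+u2*a2) + (w0*a0+w1*a1+w2*a2) = 0 := by
  have hdist : (u0-w0)^2+(u1-w1)^2+(u2-w2)^2 > 0 := by
    rcases not_and_or.mp hne with h | h
    · nlinarith [sq_nonneg (u1-w1), sq_nonneg (u2-w2), sq_pos_of_ne_zero (sub_ne_zero.mpr h)]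
    rcases not_and_or.mp h with h | h
    · nlinarith [sq_nonneg (u0-w0), sq_nonneg (u2-w2), sq_pos_of_ne_zero (sub_ne_zero.mpr h)]
    · nlinarith [sq_nonneg (u0-w0), sq_nonneg (u1-w1), sq_pos_of_ne_zero (sub_ne_zero.mpr h)]
  have hs : 1 - (u0*w0+u1*w1+u2*w2) > 0 := by nlinarith
  have key : ((u0*a0+u1*a1+u2*a2) + (w0*a0+w1*a1+w2*a2)) * (1 - (u0*w0+u1*w1+u2*w2)) = 0 := by
    linear_combination (w0-u0)*eu0 + (w1-u1)*eu1 + (w2-u2)*eu2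
      - (w0-u0)*ew0 - (w1-u1)*ew1 - (w2-u2)*ew2
      - (u0*a0+u1*a1+u2*a2)*hu - (w0*a0+w1*a1+w2*a2)*hw
  rcases mul_eq_zero.mp key with h | h
  · exact h
  · exact absurd h (by linarith)

private lemma real_main' (x0 x1 x2 y0 y1 y2 z0 z1 z2 a0 a1 a2 b0 b1 b2 : ℝ)
    (hx : x0^2+x1^2+x2^2 = 1) (hy : y0^2+y1^2+y2^2 = 1) (hz : z0^2+z1^2+z2^2 = 1)
    (hxy : ¬(x0=y0 ∧ x1=y1 ∧ x2=y2))
    (hxz : ¬(x0=z0 ∧ x1=z1 ∧ x2=z2))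
    (hyz : ¬(y0=z0 ∧ y1=z1 ∧ y2=z2))
    (ex0 : a0 - (x0*a0+x1*a1+x2*a2)*x0 + (x1*b2-x2*b1) = 0)
    (ex1 : a1 - (x0*a0+x1*a1+x2*a2)*x1 + (x2*b0-x0*b2) = 0)
    (ex2 : a2 - (x0*a0+x1*a1+x2*a2)*x2 + (x0*b1-x1*b0) = 0)
    (ey0 : a0 - (y0*a0+y1*a1+y2*a2)*y0 + (y1*b2-y2*b1) = 0)
    (ey1 : a1 - (y0*a0+y1*a1+y2*a2)*y1 + (y2*b0-y0*b2) = 0)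
    (ey2 : a2 - (y0*a0+y1*a1+y2*a2)*y2 + (y0*b1-y1*b0) = 0)
    (ez0 : a0 - (z0*a0+z1*a1+z2*a2)*z0 + (z1*b2-z2*b1) = 0)
    (ez1 : a1 - (z0*a0+z1*a1+z2*a2)*z1 + (z2*b0-z0*b2) = 0)
    (ez2 : a2 - (z0*a0+z1*a1+z2*a2)*z2 + (z0*b1-z1*b0) = 0) :
    (a0 = 0 ∧ a1 = 0 ∧ a2 = 0) ∧ (b0 = 0 ∧ b1 = 0 ∧ b2 = 0) := by
  have pxy := pair_sum' x0 x1 x2 y0 y1 y2 a0 a1 a2 b0 b1 b2 hx hy hxy ex0 ex1 ex2 ey0 ey1 ey2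
  have pxz := pair_sum' x0 x1 x2 z0 z1 z2 a0 a1 a2 b0 b1 b2 hx hz hxz ex0 ex1 ex2 ez0 ez1 ez2
  have pyz := pair_sum' y0 y1 y2 z0 z1 z2 a0 a1 a2 b0 b1 b2 hy hz hyz ey0 ey1 ey2 ez0 ez1 ez2
  have hpx : x0*a0+x1*a1+x2*a2 = 0 := by linarith
  have hpy : y0*a0+y1*a1+y2*a2 = 0 := by linarith
  have hpz : z0*a0+z1*a1+z2*a2 = 0 := by linarith
  have ax0 : a0 + (x1*b2-x2*b1) = 0 := by linear_combination ex0 + x0*hpx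
  have ax1 : a1 + (x2*b0-x0*b2) = 0 := by linear_combination ex1 + x1*hpx
  have ax2 : a2 + (x0*b1-x1*b0) = 0 := by linear_combination ex2 + x2*hpx
  have ay0 : a0 + (y1*b2-y2*b1) = 0 := by linear_combination ey0 + y0*hpy
  have ay1 : a1 + (y2*b0-y0*b2) = 0 := by linear_combination ey1 + y1*hpy
  have ay2 : a2 + (y0*b1-y1*b0) = 0 := by linear_combination ey2 + y2*hpy
  have az0 : a0 + (z1*b2-z2*b1) = 0 := by linear_combination ez0 + z0*hpz
  have az1 : a1 + (z2*b0-z0*b2) = 0 := by linear_combination ez1 + z1*hpz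
  have az2 : a2 + (z0*b1-z1*b0) = 0 := by linear_combination ez2 + z2*hpz
  have cxy0 : (x1-y1)*b2 - (x2-y2)*b1 = 0 := by linear_combination ax0 - ay0
  have cxy1 : (x2-y2)*b0 - (x0-y0)*b2 = 0 := by linear_combination ax1 - ay1
  have cxy2 : (x0-y0)*b1 - (x1-y1)*b0 = 0 := by linear_combination ax2 - ay2
  have cxz0 : (x1-z1)*b2 - (x2-z2)*b1 = 0 := by linear_combination ax0 - az0
  have cxz1 : (x2-z2)*b0 - (x0-z0)*b2 = 0 := by linear_combination ax1 - az1
  have cxz2 : (x0-z0)*b1 - (x1-z1)*b0 = 0 := by linear_combination ax2 - az2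
  by_cases hb : b0 = 0 ∧ b1 = 0 ∧ b2 = 0
  · obtain ⟨h0, h1, h2⟩ := hb
    subst h0; subst h1; subst h2
    refine ⟨⟨by linarith, by linarith, by linarith⟩, rfl, rfl, rfl⟩
  · exfalso
    have hB : 0 < b0^2+b1^2+b2^2 := by
      rcases not_and_or.mp hb with h | h
      · linarith only [sq_nonneg b1, sq_nonneg b2, sq_pos_of_ne_zero h]
      rcases not_and_or.mp h with h | h
      · linarith only [sq_nonneg b0, sq_nonneg b2, sq_pos_of_ne_zero h]
      · linarith only [sq_nonneg b0, sq_nonneg b1, sq_pos_of_ne_zero h]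
    have hBne : (b0^2+b1^2+b2^2) ≠ 0 := ne_of_gt hB
    set B := b0^2+b1^2+b2^2 with hBdef
    set s := ((x0-y0)*b0 + (x1-y1)*b1 + (x2-y2)*b2) / B with hsdef
    set t := ((x0-z0)*b0 + (x1-z1)*b1 + (x2-z2)*b2) / B with htdef
    have hs0 : x0 - y0 = s*b0 := by
      rw [hsdef]; field_simp; linear_combination b1*cxy2 - b2*cxy1
    have hs1 : x1 - y1 = s*b1 := by
      rw [hsdef]; field_simp; linear_combination b2*cxy0 - b0*cxy2
    have hs2 : x2 - y2 = s*b2 := by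
      rw [hsdef]; field_simp; linear_combination b0*cxy1 - b1*cxy0
    have ht0 : x0 - z0 = t*b0 := by
      rw [htdef]; field_simp; linear_combination b1*cxz2 - b2*cxz1
    have ht1 : x1 - z1 = t*b1 := by
      rw [htdef]; field_simp; linear_combination b2*cxz0 - b0*cxz2
    have ht2 : x2 - z2 = t*b2 := by
      rw [htdef]; field_simp; linear_combination b0*cxz1 - b1*cxz0
    have hsq : s * (s*B - 2*(x0*b0+x1*b1+x2*b2)) = 0 := by
      linear_combination hy - hx + (y0 + x0 - s*b0)*hs0 + (y1 + x1 - s*b1)*hs1 + (y2 + x2 - s*b2)*hs2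
    have htq : t * (t*B - 2*(x0*b0+x1*b1+x2*b2)) = 0 := by
      linear_combination hz - hx + (z0 + x0 - t*b0)*ht0 + (z1 + x1 - t*b1)*ht1 + (z2 + x2 - t*b2)*ht2
    have hsne : s ≠ 0 := by
      intro h
      rw [h, zero_mul] at hs0 hs1 hs2
      exact hxy ⟨by linarith, by linarith, by linarith⟩
    have htne : t ≠ 0 := by
      intro h
      rw [h, zero_mul] at ht0 ht1 ht2
      exact hxz ⟨by linarith, by linarith, by linarith⟩
    have hsB : s*B = 2*(x0*b0+x1*b1+x2*b2) := by
      rcases mul_eq_zero.mp hsq with h | h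
      · exact absurd h hsne
      · linarith
    have htB : t*B = 2*(x0*b0+x1*b1+x2*b2) := by
      rcases mul_eq_zero.mp htq with h | h
      · exact absurd h htne
      · linarith
    have hst : s = t := by
      have h0 : (s - t) * B = 0 := by linarith
      rcases mul_eq_zero.mp h0 with h | h
      · linarith
      · exact absurd h hBne
    rw [hst] at hs0 hs1 hs2
    exact hyz ⟨by linarith, by linarith, by linarith⟩

private lemma inner_expand' (x y : E3) : (inner ℝ x y : ℝ) = x 0 * y 0 + x 1 * y 1 + x 2 * y 2 := by
  simp [PiLp.inner_apply, Fin.sum_univ_three]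
  ring

private lemma norm_one_sq' (x : E3) (h : ‖x‖ = 1) : x 0 ^2 + x 1 ^2 + x 2 ^2 = 1 := by
  have h2 := real_inner_self_eq_norm_sq x
  rw [h, inner_expand'] at h2
  nlinarith [h2]

private lemma exists_orth' (X : E3) (hX : ‖X‖ = 1) : ∃ v : E3, v ≠ 0 ∧ (inner ℝ X v : ℝ) = 0 := by
  by_cases h : (EuclideanSpace.single 0 1 : E3) - X 0 • X = 0
  · refine ⟨(EuclideanSpace.single 1 1 : E3) - X 1 • X, ?_, ?_⟩
    · intro h2
      have h0 := congrArg (fun w : E3 => w 0) h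
      have h1 := congrArg (fun w : E3 => w 1) h2
      have hn := norm_one_sq' X hX
      simp [EuclideanSpace.single_apply] at h0 h1
      nlinarith [h0, h1, sq_nonneg (X 2)]
    · rw [inner_sub_right, real_inner_smul_right]
      have h1 : (inner ℝ X (EuclideanSpace.single 1 1 : E3) : ℝ) = X 1 := by
        simp [inner_expand', EuclideanSpace.single_apply]
      rw [h1]
      have h2 : (inner ℝ X X : ℝ) = 1 := by
        rw [real_inner_self_eq_norm_sq, hX]; norm_num
      rw [h2]; ring
  · refine ⟨(EuclideanSpace.single 0 1 : E3) - X 0 • X, h, ?_⟩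
    rw [inner_sub_right, real_inner_smul_right]
    have h1 : (inner ℝ X (EuclideanSpace.single 0 1 : E3) : ℝ) = X 0 := by
      simp [inner_expand', EuclideanSpace.single_apply]
    have h2 : (inner ℝ X X : ℝ) = 1 := by
      rw [real_inner_self_eq_norm_sq, hX]; norm_num
    rw [h1, h2]; ring

private lemma near_point' (X v : E3) (hX : ‖X‖ = 1) (hv : (inner ℝ X v : ℝ) = 0) (t : ℝ) (ht : 0 ≤ t) :
    ∃ Y : E3, ‖Y‖ = 1 ∧ ‖Y - X‖^2 ≤ 2*t^2*‖v‖^2 ∧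
      (inner ℝ Y v : ℝ) * ‖X + t•v‖ = t*‖v‖^2 ∧ (inner ℝ Y X : ℝ) * ‖X + t•v‖ = 1 := by
  set n := ‖X + t•v‖ with hndef
  have hn2 : n^2 = 1 + t^2*‖v‖^2 := by
    rw [hndef, norm_add_sq_real, real_inner_smul_right, hv, hX, norm_smul]
    simp [abs_of_nonneg ht]
    ring
  have hn1 : 1 ≤ n := by
    have hnn : 0 ≤ n := norm_nonneg _
    nlinarith [mul_nonneg (sq_nonneg t) (sq_nonneg ‖v‖), sq_nonneg (n-1), sq_nonneg (n+1)]
  have hnpos : 0 < n := lt_of_lt_of_le one_pos hn1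
  have hnne : n ≠ 0 := ne_of_gt hnpos
  have hnormY : ‖n⁻¹ • (X + t•v)‖ = 1 := by
    rw [norm_smul, ← hndef]
    rw [Real.norm_eq_abs, abs_inv, abs_of_pos hnpos]
    exact inv_mul_cancel₀ hnne
  have hXX : (inner ℝ X X : ℝ) = 1 := by
    rw [real_inner_self_eq_norm_sq, hX]; norm_num
  have hvX : (inner ℝ v X : ℝ) = 0 := by rw [real_inner_comm]; exact hv
  have hinnerX : (inner ℝ (n⁻¹ • (X + t•v)) X : ℝ) = n⁻¹ := by
    rw [real_inner_smul_left, inner_add_left, real_inner_smul_left, hXX, hvX]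
    ring
  have hinnerv : (inner ℝ (n⁻¹ • (X + t•v)) v : ℝ) = n⁻¹ * (t * ‖v‖^2) := by
    rw [real_inner_smul_left, inner_add_left, real_inner_smul_left, hv,
      real_inner_self_eq_norm_sq]
    ring
  refine ⟨n⁻¹ • (X + t•v), hnormY, ?_, ?_, ?_⟩
  · rw [norm_sub_sq_real, hinnerX, hnormY, hX]
    have hinv : n * n⁻¹ = 1 := mul_inv_cancel₀ hnne
    nlinarith [inv_pos.mpr hnpos, mul_le_mul_of_nonneg_left hn1 (le_of_lt (inv_pos.mpr hnpos))]
  · rw [hinnerv]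
    field_simp
  · rw [hinnerX]
    field_simp

private lemma components' (a b P : E3) (h : (a - (inner ℝ P a : ℝ) • P) + cross3 P b = 0) :
    (a 0 - (P 0*a 0+P 1*a 1+P 2*a 2)*P 0 + (P 1*b 2-P 2*b 1) = 0) ∧
    (a 1 - (P 0*a 0+P 1*a 1+P 2*a 2)*P 1 + (P 2*b 0-P 0*b 2) = 0) ∧
    (a 2 - (P 0*a 0+P 1*a 1+P 2*a 2)*P 2 + (P 0*b 1-P 1*b 0) = 0) := by
  have h0 := congrArg (fun w : E3 => w 0) h
  have h1 := congrArg (fun w : E3 => w 1) h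
  have h2 := congrArg (fun w : E3 => w 2) h
  simp [cross3, PiLp.add_apply, PiLp.sub_apply, PiLp.smul_apply, smul_eq_mul,
    inner_expand', Fin.sum_univ_three] at h0 h1 h2
  refine ⟨by linarith [h0], by linarith [h1], by linarith [h2]⟩

private lemma ne_coords' {P Q : E3} (h : P ≠ Q) : ¬(P 0 = Q 0 ∧ P 1 = Q 1 ∧ P 2 = Q 2) := by
  rintro ⟨h0, h1, h2⟩
  apply h
  ext i
  fin_cases i <;> assumption

end Aux

/-- (Linear independence of the electric and magnetic mode-1
tangent fields on any angular region.) If `a, b ∈ ℝ³` and the tangent field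
`x ↦ (a - ⟨x,a⟩·x) + (x × b)` (i.e. `Σₘ aₘ·Eₘ + Σₘ bₘ·Hₘ`) vanishes on some
nonempty open subset of the unit sphere `S² ⊆ ℝ³`, then `a = 0` and `b = 0`. -/
theorem mode_one_tangent_fields_linearly_independent_on_angular_region
    (a b : EuclideanSpace ℝ (Fin 3))
    (U : Set (Metric.sphere (0 : EuclideanSpace ℝ (Fin 3)) 1))
    (hUopen : IsOpen U) (hUne : U.Nonempty)
    (hvanish : ∀ x ∈ U,
      (a - (inner ℝ (x : EuclideanSpace ℝ (Fin 3)) a : ℝ) • (x : EuclideanSpace ℝ (Fin 3)))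
        + cross3 (x : EuclideanSpace ℝ (Fin 3)) b = 0) :
    a = 0 ∧ b = 0 := by
  obtain ⟨x₀, hx₀U⟩ := hUne
  obtain ⟨ε, hε, hball⟩ := Metric.isOpen_iff.mp hUopen x₀ hx₀U
  set X : EuclideanSpace ℝ (Fin 3) := (x₀ : EuclideanSpace ℝ (Fin 3)) with hXdef
  have hX : ‖X‖ = 1 := by
    have h := x₀.2
    rwa [mem_sphere_zero_iff_norm] at h
  obtain ⟨v, hvne, hvorth⟩ := exists_orth' X hX
  have hvpos : 0 < ‖v‖ := norm_pos_iff.mpr hvne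
  set t₁ : ℝ := ε / (2*‖v‖) with ht₁def
  have ht₁ : 0 < t₁ := div_pos hε (by positivity)
  set t₂ : ℝ := t₁/2 with ht₂def
  have ht₂ : 0 < t₂ := by positivity
  have mk : ∀ t : ℝ, 0 < t → t ≤ t₁ →
      ∃ Y : EuclideanSpace ℝ (Fin 3), ‖Y‖ = 1 ∧
        (∃ hYs : Y ∈ Metric.sphere (0 : EuclideanSpace ℝ (Fin 3)) 1,
          (⟨Y, hYs⟩ : Metric.sphere (0 : EuclideanSpace ℝ (Fin 3)) 1) ∈ U) ∧
        (inner ℝ Y v : ℝ) * ‖X + t•v‖ = t*‖v‖^2 ∧ (inner ℝ Y X : ℝ) * ‖X + t•v‖ = 1 := by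
    intro t ht htle
    obtain ⟨Y, hY1, hY2, hY3, hY4⟩ := near_point' X v hX hvorth t (le_of_lt ht)
    have htv : t * ‖v‖ ≤ ε / 2 :=
      (le_div_iff₀ hvpos).mp (by rw [div_div]; exact htle)
    have hlt2 : ‖Y - X‖^2 < ε^2 := by nlinarith [mul_nonneg (le_of_lt ht) (le_of_lt hvpos)]
    have hlt : ‖Y - X‖ < ε := by nlinarith [norm_nonneg (Y - X)]
    have hYs : Y ∈ Metric.sphere (0 : EuclideanSpace ℝ (Fin 3)) 1 :=
      mem_sphere_zero_iff_norm.mpr hY1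
    refine ⟨Y, hY1, ⟨hYs, ?_⟩, hY3, hY4⟩
    apply hball
    rw [Metric.mem_ball, Subtype.dist_eq, dist_eq_norm]
    exact hlt
  obtain ⟨Y₁, hY₁1, ⟨hY₁s, hY₁U⟩, hY₁v, hY₁X⟩ := mk t₁ ht₁ le_rfl
  obtain ⟨Y₂, hY₂1, ⟨hY₂s, hY₂U⟩, hY₂v, hY₂X⟩ := mk t₂ ht₂ (by linarith)
  -- distinctness
  have hXY₁ : X ≠ Y₁ := by
    intro h
    rw [← h, hvorth, zero_mul] at hY₁v
    have := mul_pos ht₁ (pow_pos hvpos 2)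
    linarith
  have hXY₂ : X ≠ Y₂ := by
    intro h
    rw [← h, hvorth, zero_mul] at hY₂v
    have := mul_pos ht₂ (pow_pos hvpos 2)
    linarith
  have hY₁Y₂ : Y₁ ≠ Y₂ := by
    intro h
    rw [← h] at hY₂v hY₂X
    have hc : (inner ℝ Y₁ X : ℝ) ≠ 0 := by
      intro h0
      rw [h0, zero_mul] at hY₁X
      exact one_ne_zero hY₁X.symm
    have hn : ‖X + t₁•v‖ = ‖X + t₂•v‖ :=
      mul_left_cancel₀ hc (hY₁X.trans hY₂X.symm)
    rw [hn] at hY₁v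
    have ht12 : t₁ * ‖v‖^2 = t₂ * ‖v‖^2 := hY₁v.symm.trans hY₂v
    have hv2 : (0:ℝ) < ‖v‖^2 := by positivity
    have heq : t₁ = t₂ := mul_right_cancel₀ (ne_of_gt hv2) ht12
    rw [ht₂def] at heq
    linarith
  -- equations at the three points
  have eX := components' a b X (hvanish x₀ hx₀U)
  have eY₁ := components' a b Y₁ (hvanish ⟨Y₁, hY₁s⟩ hY₁U)
  have eY₂ := components' a b Y₂ (hvanish ⟨Y₂, hY₂s⟩ hY₂U)
  obtain ⟨⟨ha0, ha1, ha2⟩, ⟨hb0, hb1, hb2⟩⟩ :=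
    real_main' (X 0) (X 1) (X 2) (Y₁ 0) (Y₁ 1) (Y₁ 2) (Y₂ 0) (Y₂ 1) (Y₂ 2)
      (a 0) (a 1) (a 2) (b 0) (b 1) (b 2)
      (norm_one_sq' X hX) (norm_one_sq' Y₁ hY₁1) (norm_one_sq' Y₂ hY₂1)
      (ne_coords' hXY₁) (ne_coords' hXY₂) (ne_coords' hY₁Y₂)
      eX.1 eX.2.1 eX.2.2 eY₁.1 eY₁.2.1 eY₁.2.2 eY₂.1 eY₂.2.1 eY₂.2.2
  constructor
  · ext i
    fin_cases i
    · simpa using ha0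
    · simpa using ha1
    · simpa using ha2
  · ext i
    fin_cases i
    · simpa using hb0
    · simpa using hb1
    · simpa using hb2
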